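/- Let g : ℝᵖ \ {0} → ℝ₊* satisfy g(tx) = t·g(x) for all t > 0 (positively homogeneous of degree 1) and g > 0. If a random vector x in ℝᵖ \ {0} has density f(x) = f_G(g(x)) with respect to Lebesgue measure, then the random variables g(x) and z = x/g(x) are independent, the density of g(x) with respect to dg is proportional to f_G(g)·g^{p-1}, and the distribution of z on Z = {x : g(x) = 1} does not depend on f_G (it depends only on g). -/

import Mathlib

open MeasureTheory ProbabilityTheory Set Metric
open scoped ENNReal


lemma scale1d (c : ℝ) (hc : 0 < c) (n : ℕ) (φ : ℝ → ℝ≥0∞) (hφ : Measurable φ) :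
    ∫⁻ r in Set.Ioi (0:ℝ), ENNReal.ofReal (r ^ n) * φ (r * c) =
      ENNReal.ofReal (c⁻¹ ^ (n+1)) * ∫⁻ t in Set.Ioi (0:ℝ), ENNReal.ofReal (t ^ n) * φ t := by
  set H : ℝ → ℝ≥0∞ := fun t => ENNReal.ofReal (t ^ n) * φ t with hH
  have hHmeas : Measurable H := (measurable_id.pow_const n).ennreal_ofReal.mul hφ
  have hpre : (fun r : ℝ => r * c) ⁻¹' Set.Ioi 0 = Set.Ioi 0 := by
    ext r; simp [mul_pos_iff, hc, not_lt.2 hc.le, hc.not_gt, mul_pos_iff_of_pos_right hc]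
  have step1 : ∀ r ∈ Set.Ioi (0:ℝ),
      ENNReal.ofReal (r ^ n) * φ (r * c) = ENNReal.ofReal (c⁻¹ ^ n) * H (r * c) := by
    intro r hr
    rw [hH]
    rw [← mul_assoc, ← ENNReal.ofReal_mul (by positivity)]
    congr 2
    field_simp [mul_pow]
    rw [← mul_pow, one_div, ← mul_assoc, inv_mul_cancel₀ hc.ne', one_mul]
  have hHc : Measurable fun r : ℝ => H (r * c) := hHmeas.comp (measurable_mul_const c)
  rw [setLIntegral_congr_fun measurableSet_Ioi step1,
    lintegral_const_mul _ hHc]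
  have step2 : ∫⁻ r in Set.Ioi (0:ℝ), H (r * c) ∂volume
      = ENNReal.ofReal c⁻¹ * ∫⁻ t in Set.Ioi (0:ℝ), H t ∂volume := by
    have hmap : (Measure.map (· * c) volume).restrict (Set.Ioi 0)
        = Measure.map (· * c) (volume.restrict (Set.Ioi 0)) := by
      rw [Measure.restrict_map (measurable_mul_const c) measurableSet_Ioi, hpre]
    calc ∫⁻ r in Set.Ioi (0:ℝ), H (r * c) ∂volume
        = ∫⁻ t, H t ∂(Measure.map (· * c) (volume.restrict (Set.Ioi 0))) := by
          rw [lintegral_map hHmeas (measurable_mul_const c)]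
      _ = ∫⁻ t, H t ∂((ENNReal.ofReal |c⁻¹| • volume).restrict (Set.Ioi 0)) := by
          rw [← hmap, Real.map_volume_mul_right hc.ne']
      _ = ENNReal.ofReal c⁻¹ * ∫⁻ t in Set.Ioi (0:ℝ), H t ∂volume := by
          rw [Measure.restrict_smul, lintegral_smul_measure, abs_of_pos (inv_pos.2 hc), smul_eq_mul]
  rw [step2, ← mul_assoc, ← ENNReal.ofReal_mul (by positivity), pow_succ]

lemma polar_lemma (p : ℕ) (hp : 0 < p)
    (g : EuclideanSpace ℝ (Fin p) → ℝ) (hgmeas : Measurable g)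
    (hgpos : ∀ x : EuclideanSpace ℝ (Fin p), x ≠ 0 → 0 < g x)
    (hghom : ∀ t : ℝ, 0 < t → ∀ x : EuclideanSpace ℝ (Fin p), x ≠ 0 →
      g (t • x) = t * g x)
    (φ : ℝ → ℝ≥0∞) (hφ : Measurable φ)
    (ψ : EuclideanSpace ℝ (Fin p) → ℝ≥0∞) (hψ : Measurable ψ) :
    ∫⁻ x, φ (g x) * ψ ((g x)⁻¹ • x) ∂(volume : Measure (EuclideanSpace ℝ (Fin p))) =
      (∫⁻ t in Set.Ioi (0:ℝ), ENNReal.ofReal (t ^ (p-1)) * φ t) *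
      ∫⁻ u : Metric.sphere (0 : EuclideanSpace ℝ (Fin p)) 1,
        ENNReal.ofReal ((g u)⁻¹ ^ p) * ψ ((g u)⁻¹ • (u : EuclideanSpace ℝ (Fin p)))
        ∂((volume : Measure (EuclideanSpace ℝ (Fin p))).toSphere) := by
  haveI : Nonempty (Fin p) := ⟨⟨0, hp⟩⟩
  haveI : Nontrivial (EuclideanSpace ℝ (Fin p)) := inferInstance
  set F : EuclideanSpace ℝ (Fin p) → ℝ≥0∞ := fun x => φ (g x) * ψ ((g x)⁻¹ • x) with hF
  have hzmeas : Measurable fun x : EuclideanSpace ℝ (Fin p) => (g x)⁻¹ • x := by fun_prop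
  have hFmeas : Measurable F := by fun_prop
  have hdim : Module.finrank ℝ (EuclideanSpace ℝ (Fin p)) = p := finrank_euclideanSpace_fin
  have hMP := Measure.measurePreserving_homeomorphUnitSphereProd
    (volume : Measure (EuclideanSpace ℝ (Fin p)))
  rw [show Module.finrank ℝ (EuclideanSpace ℝ (Fin p)) - 1 = p - 1 from by rw [hdim]] at hMP
  set ν : Measure (Metric.sphere (0:EuclideanSpace ℝ (Fin p)) 1 × Set.Ioi (0:ℝ)) :=
    (volume : Measure (EuclideanSpace ℝ (Fin p))).toSphere.prod (Measure.volumeIoiPow (p - 1))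
    with hν
  set f : Metric.sphere (0:EuclideanSpace ℝ (Fin p)) 1 × Set.Ioi (0:ℝ) → ℝ≥0∞ :=
    fun y => F ((y.2 : ℝ) • (y.1 : EuclideanSpace ℝ (Fin p))) with hf
  have step1 : ∫⁻ x, F x ∂(volume : Measure (EuclideanSpace ℝ (Fin p))) = ∫⁻ y, f y ∂ν := by
    calc ∫⁻ x, F x ∂(volume : Measure (EuclideanSpace ℝ (Fin p)))
        = ∫⁻ x in ({0}ᶜ : Set (EuclideanSpace ℝ (Fin p))), F x ∂volume := by
          rw [restrict_compl_singleton]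
      _ = ∫⁻ x : ({0}ᶜ : Set (EuclideanSpace ℝ (Fin p))), F x.1 ∂(Measure.comap Subtype.val volume) := by
          rw [lintegral_subtype_comap (measurableSet_singleton (0:EuclideanSpace ℝ (Fin p))).compl]
      _ = ∫⁻ x : ({0}ᶜ : Set (EuclideanSpace ℝ (Fin p))),
            f (homeomorphUnitSphereProd (EuclideanSpace ℝ (Fin p)) x)
            ∂(Measure.comap Subtype.val volume) := by
          refine lintegral_congr fun x => ?_
          rw [hf]
          simp only [← homeomorphUnitSphereProd_symm_apply_coe,
            Homeomorph.symm_apply_apply]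
      _ = ∫⁻ y, f y ∂ν :=
          hMP.lintegral_comp_emb (Homeomorph.measurableEmbedding _) f
  have hptwise : ∀ y : Metric.sphere (0:EuclideanSpace ℝ (Fin p)) 1 × Set.Ioi (0:ℝ),
      f y = φ ((y.2 : ℝ) * g y.1) * ψ ((g y.1)⁻¹ • (y.1 : EuclideanSpace ℝ (Fin p))) := by
    rintro ⟨u, r⟩
    have hu0 : (u : EuclideanSpace ℝ (Fin p)) ≠ 0 := ne_of_mem_sphere u.2 one_ne_zero
    have hr0 : (0:ℝ) < r := r.2
    have h1 : g ((r : ℝ) • (u : EuclideanSpace ℝ (Fin p))) = (r : ℝ) * g u :=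
      hghom r hr0 u hu0
    have h2 : (g ((r : ℝ) • (u : EuclideanSpace ℝ (Fin p))))⁻¹ •
        ((r : ℝ) • (u : EuclideanSpace ℝ (Fin p))) = (g u)⁻¹ • (u : EuclideanSpace ℝ (Fin p)) := by
      rw [h1, smul_smul, mul_inv_rev, mul_assoc, inv_mul_cancel₀ hr0.ne', mul_one]
    simp only [hf, hF]
    rw [h2, h1]
  rw [step1, lintegral_congr hptwise]
  have hinner_meas : Measurable fun y : Metric.sphere (0:EuclideanSpace ℝ (Fin p)) 1 × Set.Ioi (0:ℝ) =>
      φ ((y.2 : ℝ) * g y.1) * ψ ((g y.1)⁻¹ • (y.1 : EuclideanSpace ℝ (Fin p))) := by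
    fun_prop
  rw [hν, lintegral_prod _ hinner_meas.aemeasurable]
  have hinner : ∀ u : Metric.sphere (0:EuclideanSpace ℝ (Fin p)) 1,
      (∫⁻ r : Set.Ioi (0:ℝ), φ ((r : ℝ) * g u) * ψ ((g u)⁻¹ • (u : EuclideanSpace ℝ (Fin p)))
        ∂(Measure.volumeIoiPow (p - 1)))
      = (∫⁻ t in Set.Ioi (0:ℝ), ENNReal.ofReal (t ^ (p-1)) * φ t) *
          (ENNReal.ofReal ((g u)⁻¹ ^ p) * ψ ((g u)⁻¹ • (u : EuclideanSpace ℝ (Fin p)))) := by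
    intro u
    have hu0 : (u : EuclideanSpace ℝ (Fin p)) ≠ 0 := ne_of_mem_sphere u.2 one_ne_zero
    have hgu : 0 < g u := hgpos u hu0
    have hφc : Measurable fun r : Set.Ioi (0:ℝ) => φ ((r : ℝ) * g u) := by fun_prop
    rw [lintegral_mul_const _ hφc]
    have key : (∫⁻ r : Set.Ioi (0:ℝ), φ ((r : ℝ) * g u) ∂(Measure.volumeIoiPow (p - 1)))
        = ENNReal.ofReal ((g u)⁻¹ ^ p) *
          ∫⁻ t in Set.Ioi (0:ℝ), ENNReal.ofReal (t ^ (p-1)) * φ t := by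
      rw [Measure.volumeIoiPow,
        lintegral_withDensity_eq_lintegral_mul _
          (by fun_prop : Measurable fun r : Set.Ioi (0:ℝ) => ENNReal.ofReal ((r:ℝ) ^ (p-1))) hφc]
      have h2 : ∫⁻ r : Set.Ioi (0:ℝ), ENNReal.ofReal ((r:ℝ) ^ (p-1)) * φ ((r : ℝ) * g u)
          ∂(Measure.comap Subtype.val volume)
          = ∫⁻ r in Set.Ioi (0:ℝ), ENNReal.ofReal (r ^ (p-1)) * φ (r * g u) ∂volume :=
        lintegral_subtype_comap measurableSet_Ioi (fun a : ℝ => ENNReal.ofReal (a ^ (p-1)) * φ (a * g ↑u))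
      rw [show (fun r : Set.Ioi (0:ℝ) =>
          ((fun a : Set.Ioi (0:ℝ) => ENNReal.ofReal ((a:ℝ) ^ (p-1)))
            * fun a : Set.Ioi (0:ℝ) => φ ((a:ℝ) * g u)) r)
          = fun r : Set.Ioi (0:ℝ) => ENNReal.ofReal ((r:ℝ) ^ (p-1)) * φ ((r : ℝ) * g u) from rfl]
      rw [h2, scale1d _ hgu _ _ hφ, Nat.sub_add_cancel hp]
    rw [key]; ring
  rw [lintegral_congr hinner]
  have hmeas2 : Measurable fun u : Metric.sphere (0:EuclideanSpace ℝ (Fin p)) 1 =>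
      ENNReal.ofReal ((g u)⁻¹ ^ p) * ψ ((g u)⁻¹ • (u : EuclideanSpace ℝ (Fin p))) := by
    fun_prop
  rw [lintegral_const_mul _ hmeas2]

/-- For a star-shaped distribution with density `f_G(g(x))` with respect to Lebesgue
measure on `ℝᵖ`, the "length" `g(x)` and "invariant part" `z = x/g(x)` are independent,
the law of `g(x)` has density proportional to `f_G(t) t^{p-1}` on `(0,∞)`, and the law
of `z` does not depend on `f_G`. -/
theorem stmt16 (p : ℕ) (hp : 0 < p)
    (g : EuclideanSpace ℝ (Fin p) → ℝ) (hgmeas : Measurable g)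
    (hgpos : ∀ x : EuclideanSpace ℝ (Fin p), x ≠ 0 → 0 < g x)
    (hghom : ∀ t : ℝ, 0 < t → ∀ x : EuclideanSpace ℝ (Fin p), x ≠ 0 →
      g (t • x) = t * g x)
    (fG : ℝ → ℝ) (hfGmeas : Measurable fG) (hfGnn : ∀ t, 0 ≤ fG t)
    (μ : Measure (EuclideanSpace ℝ (Fin p)))
    (hμ : μ = volume.withDensity fun x => ENNReal.ofReal (fG (g x)))
    (hprob : IsProbabilityMeasure μ) :
    IndepFun (fun x => g x) (fun x => (g x)⁻¹ • x) μ ∧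
    (∃ c : ℝ≥0∞, c ≠ 0 ∧ c ≠ ⊤ ∧
      Measure.map g μ = volume.withDensity
        fun t : ℝ => if 0 < t then c * ENNReal.ofReal (fG t * t ^ (p - 1)) else 0) ∧
    (∀ fG' : ℝ → ℝ, Measurable fG' → (∀ t, 0 ≤ fG' t) →
      ∀ μ' : Measure (EuclideanSpace ℝ (Fin p)),
        μ' = volume.withDensity (fun x => ENNReal.ofReal (fG' (g x))) →
        IsProbabilityMeasure μ' →
        Measure.map (fun x => (g x)⁻¹ • x) μ =
          Measure.map (fun x => (g x)⁻¹ • x) μ') := by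
  haveI := hprob
  have hz : Measurable (fun x : EuclideanSpace ℝ (Fin p) => (g x)⁻¹ • x) := by fun_prop
  set Lq : (ℝ → ℝ) → Set ℝ → ℝ≥0∞ := fun q A =>
    ∫⁻ t in Set.Ioi (0:ℝ), ENNReal.ofReal (t ^ (p-1)) *
      (A.indicator 1 t * ENNReal.ofReal (q t)) with hLq
  set Ks : Set (EuclideanSpace ℝ (Fin p)) → ℝ≥0∞ := fun B =>
    ∫⁻ u : Metric.sphere (0 : EuclideanSpace ℝ (Fin p)) 1,
      ENNReal.ofReal ((g u)⁻¹ ^ p) *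
        B.indicator 1 ((g u)⁻¹ • (u : EuclideanSpace ℝ (Fin p)))
      ∂((volume : Measure (EuclideanSpace ℝ (Fin p))).toSphere) with hKs
  have hjoint : ∀ q : ℝ → ℝ, Measurable q → ∀ A : Set ℝ, MeasurableSet A →
      ∀ B : Set (EuclideanSpace ℝ (Fin p)), MeasurableSet B →
      (volume.withDensity fun x => ENNReal.ofReal (q (g x)))
        ((fun x => g x) ⁻¹' A ∩ (fun x => (g x)⁻¹ • x) ⁻¹' B) = Lq q A * Ks B := by
    intro q hq A hA B hB
    have hS : MeasurableSet ((fun x => g x) ⁻¹' A ∩ (fun x => (g x)⁻¹ • x) ⁻¹' B) :=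
      (hgmeas hA).inter (hz hB)
    rw [← lintegral_indicator_one hS,
      lintegral_withDensity_eq_lintegral_mul _ (by fun_prop) (measurable_one.indicator hS)]
    have hpt : ∀ x : EuclideanSpace ℝ (Fin p),
        ENNReal.ofReal (q (g x)) *
          Set.indicator ((fun x => g x) ⁻¹' A ∩ (fun x => (g x)⁻¹ • x) ⁻¹' B)
            (1 : EuclideanSpace ℝ (Fin p) → ℝ≥0∞) x
        = (fun t => A.indicator 1 t * ENNReal.ofReal (q t)) (g x) *
            (B.indicator (1 : EuclideanSpace ℝ (Fin p) → ℝ≥0∞)) ((g x)⁻¹ • x) := by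
      intro x
      by_cases h1 : g x ∈ A <;> by_cases h2 : (g x)⁻¹ • x ∈ B <;>
        simp [Set.indicator_apply, h1, h2, mul_comm]
    simp only [Pi.mul_apply]
    rw [lintegral_congr hpt,
      polar_lemma p hp g hgmeas hgpos hghom (fun t => A.indicator 1 t * ENNReal.ofReal (q t))
        ((measurable_one.indicator hA).mul hq.ennreal_ofReal) _
        (measurable_one.indicator hB)]
  -- total mass identities
  have huniv : ∀ q : ℝ → ℝ, Measurable q →
      ∀ μ₀ : Measure (EuclideanSpace ℝ (Fin p)),
      μ₀ = volume.withDensity (fun x => ENNReal.ofReal (q (g x))) →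
      IsProbabilityMeasure μ₀ → Lq q Set.univ * Ks Set.univ = 1 := by
    intro q hq μ₀ hμ₀ hP
    have := hjoint q hq Set.univ MeasurableSet.univ Set.univ MeasurableSet.univ
    simp only [Set.preimage_univ, Set.univ_inter] at this
    rw [← hμ₀] at this
    rw [← this, hP.measure_univ]
  have h1 : Lq fG Set.univ * Ks Set.univ = 1 := huniv fG hfGmeas μ hμ hprob
  -- marginals
  have hmargA : ∀ A : Set ℝ, MeasurableSet A → μ ((fun x => g x) ⁻¹' A) = Lq fG A * Ks Set.univ := by
    intro A hA
    have := hjoint fG hfGmeas A hA Set.univ MeasurableSet.univ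
    simp only [Set.preimage_univ, Set.inter_univ] at this
    rw [hμ, this]
  have hmargB : ∀ (q : ℝ → ℝ), Measurable q → ∀ B, MeasurableSet B →
      (volume.withDensity fun x => ENNReal.ofReal (q (g x)))
        ((fun x => (g x)⁻¹ • x) ⁻¹' B) = Lq q Set.univ * Ks B := by
    intro q hq B hB
    have := hjoint q hq Set.univ MeasurableSet.univ B hB
    simpa only [Set.preimage_univ, Set.univ_inter] using this
  refine ⟨?_, ?_, ?_⟩
  · rw [indepFun_iff_measure_inter_preimage_eq_mul]
    intro A B hA hB
    have e0 : μ ((fun x => g x) ⁻¹' A ∩ (fun x => (g x)⁻¹ • x) ⁻¹' B) = Lq fG A * Ks B := by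
      rw [hμ]; exact hjoint fG hfGmeas A hA B hB
    have eB : μ ((fun x => (g x)⁻¹ • x) ⁻¹' B) = Lq fG Set.univ * Ks B := by
      rw [hμ]; exact hmargB fG hfGmeas B hB
    rw [e0, hmargA A hA, eB]
    calc Lq fG A * Ks B = Lq fG A * Ks B * (Lq fG Set.univ * Ks Set.univ) := by
          rw [h1, mul_one]
      _ = Lq fG A * Ks Set.univ * (Lq fG Set.univ * Ks B) := by ring
  · refine ⟨Ks Set.univ, ?_, ?_, ?_⟩
    · intro h; rw [h, mul_zero] at h1; exact zero_ne_one h1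
    · intro h
      rcases eq_or_ne (Lq fG Set.univ) 0 with h' | h'
      · rw [h', zero_mul] at h1; exact zero_ne_one h1
      · rw [h, ENNReal.mul_top h'] at h1; exact (ENNReal.top_ne_one h1)
    · ext s hs
      rw [Measure.map_apply hgmeas hs, withDensity_apply _ hs, hmargA s hs]
      have hd : ∀ t : ℝ, (if 0 < t then Ks Set.univ * ENNReal.ofReal (fG t * t ^ (p-1)) else 0)
          = (Set.Ioi (0:ℝ)).indicator
              (fun t => Ks Set.univ * ENNReal.ofReal (fG t * t ^ (p-1))) t := by
        intro t; simp [Set.indicator_apply, Set.mem_Ioi]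
      calc Lq fG s * Ks Set.univ
          = (∫⁻ t in Set.Ioi (0:ℝ),
              s.indicator (fun t => ENNReal.ofReal (fG t * t ^ (p-1))) t) * Ks Set.univ := by
            rw [hLq]
            congr 1
            refine setLIntegral_congr_fun measurableSet_Ioi ?_
            intro t ht
            by_cases hts : t ∈ s <;>
              simp [Set.indicator_apply, hts, ENNReal.ofReal_mul (hfGnn t), mul_comm]
        _ = (∫⁻ t in s ∩ Set.Ioi (0:ℝ), ENNReal.ofReal (fG t * t ^ (p-1))) * Ks Set.univ := by
            rw [lintegral_indicator hs, Measure.restrict_restrict hs]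
        _ = ∫⁻ t in s, if 0 < t then Ks Set.univ * ENNReal.ofReal (fG t * t ^ (p-1)) else 0 := by
            rw [lintegral_congr hd, lintegral_indicator measurableSet_Ioi,
              Measure.restrict_restrict measurableSet_Ioi,
              lintegral_const_mul _ (by fun_prop), Set.inter_comm, mul_comm]
  · intro fG' hfG'meas hfG'nn μ' hμ' hprob'
    have h1' : Lq fG' Set.univ * Ks Set.univ = 1 := huniv fG' hfG'meas μ' hμ' hprob'
    have hLL : Lq fG Set.univ = Lq fG' Set.univ := by
      calc Lq fG Set.univ = Lq fG Set.univ * (Lq fG' Set.univ * Ks Set.univ) := by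
            rw [h1', mul_one]
        _ = Lq fG' Set.univ * (Lq fG Set.univ * Ks Set.univ) := by ring
        _ = Lq fG' Set.univ := by rw [h1, mul_one]
    ext s hs
    rw [Measure.map_apply hz hs, Measure.map_apply hz hs]
    have e1 : μ ((fun x => (g x)⁻¹ • x) ⁻¹' s) = Lq fG Set.univ * Ks s := by
      rw [hμ]; exact hmargB fG hfGmeas s hs
    have e2 : μ' ((fun x => (g x)⁻¹ • x) ⁻¹' s) = Lq fG' Set.univ * Ks s := by
      rw [hμ']; exact hmargB fG' hfG'meas s hs
    rw [e1, e2, hLL]
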